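/- arXiv:2209.07004 — 2 statements merged into one kernel-verified Lean document; each statement's English description precedes it below -/
import Mathlib

section
/- Suppose 𝒢 satisfies balanced exposure, the subgraph induced on the persuadable nodes 𝒫 is connected, and at least one persuadable node is adjacent to the two zealots. Let v = ω(1) = 1/(1 + exp(γ(1 − δ))). If 1 − 2γ(1 − v) > 0, then the harmonic state x̄ is linearly stable (the Jacobian block J_𝒫(x̄) has only strictly negative eigenvalues); if 1 − 2γ(1 − v) ≤ 0, then J_𝒫(x̄) has a nonnegative eigenvalue, so x̄ is not linearly stable. -/
open Finset Filter

namespace SBCM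

variable {V : Type*} [Fintype V] [DecidableEq V]

/-- Sigmoidal influence weight. -/
noncomputable def wt (G : SimpleGraph V) [DecidableRel G.Adj] (γ δ : ℝ) (x : V → ℝ)
    (i j : V) : ℝ :=
  if G.Adj i j then 1 / (1 + Real.exp (γ * (x i - x j) ^ 2 - γ * δ)) else 0

/-- SBCM update operator. -/
noncomputable def F (G : SimpleGraph V) [DecidableRel G.Adj] (Z : Finset V) (γ δ : ℝ)
    (x : V → ℝ) (i : V) : ℝ :=
  if i ∈ Z then 0
  else (∑ j, wt G γ δ x i j * (x j - x i)) / (∑ j, wt G γ δ x i j)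

/-- Jacobian block over the persuadable nodes. -/
noncomputable def Jp (G : SimpleGraph V) [DecidableRel G.Adj] (Z : Finset V) (γ δ : ℝ)
    (x : V → ℝ) : Matrix {v : V // v ∉ Z} {v : V // v ∉ Z} ℝ :=
  fun i j => fderiv ℝ (fun y : V → ℝ => F G Z γ δ y i.val) x (Pi.single (j : V) (1 : ℝ))

/-- `μ` is a (real) eigenvalue of the matrix `M`. -/
def HasEig {n : Type*} [Fintype n] (M : Matrix n n ℝ) (μ : ℝ) : Prop :=
  ∃ φ : n → ℝ, φ ≠ 0 ∧ M.mulVec φ = μ • φ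

/-- All eigenvalues of `M` are strictly negative. -/
def LinStable {n : Type*} [Fintype n] (M : Matrix n n ℝ) : Prop :=
  ∀ μ : ℝ, HasEig M μ → μ < 0

/-- `M` has a strictly positive eigenvalue. -/
def LinUnstable {n : Type*} [Fintype n] (M : Matrix n n ℝ) : Prop :=
  ∃ μ : ℝ, 0 < μ ∧ HasEig M μ

end SBCM

namespace SBCM

/-- The harmonic state of a balanced-exposure graph: zealot `z₁` holds opinion `−1`,
zealot `z₂` holds opinion `+1`, and all persuadable nodes hold opinion `0`. -/
noncomputable def xbarBE {V : Type*} [DecidableEq V] (z₁ z₂ : V) : V → ℝ :=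
  fun v => if v = z₁ then -1 else if v = z₂ then 1 else 0

end SBCM

set_option linter.unusedSectionVars false

open Finset

namespace SBCM17

noncomputable def gd (γ δ t : ℝ) : ℝ :=
  -(2 * γ * t * Real.exp (γ * t ^ 2 - γ * δ)) / (1 + Real.exp (γ * t ^ 2 - γ * δ)) ^ 2

lemma hasDerivAt_g (γ δ t : ℝ) :
    HasDerivAt (fun u : ℝ => 1 / (1 + Real.exp (γ * u ^ 2 - γ * δ))) (gd γ δ t) t := by
  have h1 : HasDerivAt (fun u : ℝ => γ * u ^ 2 - γ * δ) (γ * (2 * t)) t := by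
    simpa using ((hasDerivAt_pow 2 t).const_mul γ).sub_const (γ * δ)
  have h2 : HasDerivAt (fun u : ℝ => Real.exp (γ * u ^ 2 - γ * δ))
      (Real.exp (γ * t ^ 2 - γ * δ) * (γ * (2 * t))) t := (Real.hasDerivAt_exp _).comp t h1
  have h3 : HasDerivAt (fun u : ℝ => 1 + Real.exp (γ * u ^ 2 - γ * δ))
      (Real.exp (γ * t ^ 2 - γ * δ) * (γ * (2 * t))) t := h2.const_add 1
  have h4 : (1 + Real.exp (γ * t ^ 2 - γ * δ)) ≠ 0 := by positivity
  have h5 := (hasDerivAt_const t (1 : ℝ)).div h3 h4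
  refine h5.congr_deriv ?_
  unfold gd
  field_simp
  ring

variable {V : Type*} [Fintype V] [DecidableEq V]

open SBCM in
lemma hasFDerivAt_wt (G : SimpleGraph V) [DecidableRel G.Adj] (γ δ : ℝ) (x : V → ℝ) (i j : V) :
    HasFDerivAt (fun y : V → ℝ => wt G γ δ y i j)
      (if G.Adj i j then
        gd γ δ (x i - x j) •
          ((ContinuousLinearMap.proj i : (V → ℝ) →L[ℝ] ℝ) - ContinuousLinearMap.proj j)
      else 0) x := by
  by_cases h : G.Adj i j
  · simp only [wt, if_pos h]
    have hl : HasFDerivAt (fun y : V → ℝ => y i - y j)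
        ((ContinuousLinearMap.proj i : (V → ℝ) →L[ℝ] ℝ) - ContinuousLinearMap.proj j) x := by
      have := ((ContinuousLinearMap.proj (R := ℝ) (φ := fun _ : V => ℝ) i).hasFDerivAt
        (x := x)).sub ((ContinuousLinearMap.proj (R := ℝ) (φ := fun _ : V => ℝ) j).hasFDerivAt
        (x := x))
      exact this
    exact (hasDerivAt_g γ δ (x i - x j)).comp_hasFDerivAt (f := fun y : V → ℝ => y i - y j) x hl
  · simp only [wt, if_neg h]
    exact hasFDerivAt_const 0 x

end SBCM17

namespace SBCM17

variable {V : Type*} [Fintype V] [DecidableEq V]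

noncomputable def w0 (γ δ : ℝ) : ℝ := 1 / (1 + Real.exp (-(γ * δ)))
noncomputable def vv (γ δ : ℝ) : ℝ := 1 / (1 + Real.exp (γ - γ * δ))
noncomputable def gone (γ δ : ℝ) : ℝ :=
  -(2 * γ * Real.exp (γ - γ * δ)) / (1 + Real.exp (γ - γ * δ)) ^ 2
noncomputable def cc (γ δ : ℝ) : ℝ := 2 * vv γ δ - 4 * γ * vv γ δ * (1 - vv γ δ)

variable (G : SimpleGraph V) [DecidableRel G.Adj]

noncomputable def bi (z₁ i : V) : ℝ := if G.Adj i z₁ then 1 else 0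

noncomputable def dPw (z₁ z₂ : V) (γ δ : ℝ) (i : V) : ℝ :=
  ∑ k : {v : V // v ∉ ({z₁, z₂} : Finset V)}, if G.Adj i k.1 then w0 γ δ else 0

noncomputable def sD (z₁ z₂ : V) (γ δ : ℝ) (i : V) : ℝ :=
  dPw G z₁ z₂ γ δ i + 2 * vv γ δ * bi G z₁ i

noncomputable def Mm (z₁ z₂ : V) (γ δ : ℝ) (i k : V) : ℝ :=
  (if G.Adj i k then w0 γ δ else 0) -
    (if i = k then dPw G z₁ z₂ γ δ i + cc γ δ * bi G z₁ i else 0)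

lemma vv_pos (γ δ : ℝ) : 0 < vv γ δ := by unfold vv; positivity

lemma vv_lt_one (γ δ : ℝ) : vv γ δ < 1 := by
  unfold vv
  rw [div_lt_one (by positivity)]
  nlinarith [Real.exp_pos (γ - γ * δ)]

lemma w0_pos (γ δ : ℝ) : 0 < w0 γ δ := by unfold w0; positivity

lemma cc_eq (γ δ : ℝ) : cc γ δ = 2 * vv γ δ + 2 * gone γ δ := by
  have hE : (0:ℝ) < 1 + Real.exp (γ - γ * δ) := by positivity
  unfold cc vv gone
  field_simp
  ring

lemma sum_split (z₁ z₂ : V) (hzz : z₁ ≠ z₂) (f : V → ℝ) :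
    ∑ j : V, f j = f z₁ + f z₂ + ∑ j : {v : V // v ∉ ({z₁, z₂} : Finset V)}, f j.1 := by
  classical
  rw [← Finset.sum_add_sum_compl ({z₁, z₂} : Finset V) f, Finset.sum_pair hzz]
  congr 1
  exact Finset.sum_subtype _ (fun x => Finset.mem_compl) f

lemma xb_z₁ (z₁ z₂ : V) : SBCM.xbarBE z₁ z₂ z₁ = -1 := by simp [SBCM.xbarBE]

lemma xb_z₂ (z₁ z₂ : V) (hzz : z₁ ≠ z₂) : SBCM.xbarBE z₁ z₂ z₂ = 1 := by
  simp [SBCM.xbarBE, hzz.symm]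

lemma xb_P (z₁ z₂ : V) (i : V) (hi : i ∉ ({z₁, z₂} : Finset V)) :
    SBCM.xbarBE z₁ z₂ i = 0 := by
  simp only [Finset.mem_insert, Finset.mem_singleton, not_or] at hi
  simp [SBCM.xbarBE, hi.1, hi.2]

theorem Jp_eval (z₁ z₂ : V) (hzz : z₁ ≠ z₂)
    (hBE : ∀ i : V, i ∉ ({z₁, z₂} : Finset V) → (G.Adj i z₁ ↔ G.Adj i z₂))
    (γ δ : ℝ) (i k : {v : V // v ∉ ({z₁, z₂} : Finset V)})
    (hD : sD G z₁ z₂ γ δ i.1 ≠ 0) :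
    SBCM.Jp G ({z₁, z₂} : Finset V) γ δ (SBCM.xbarBE z₁ z₂) i k
      = Mm G z₁ z₂ γ δ i.1 k.1 / sD G z₁ z₂ γ δ i.1 := by
  classical
  set xb : V → ℝ := SBCM.xbarBE z₁ z₂ with hxbdef
  have hi : i.1 ∉ ({z₁, z₂} : Finset V) := i.2
  have hk : k.1 ∉ ({z₁, z₂} : Finset V) := k.2
  have hiz : i.1 ≠ z₁ ∧ i.1 ≠ z₂ := by
    simpa only [Finset.mem_insert, Finset.mem_singleton, not_or] using hi
  have hkz : k.1 ≠ z₁ ∧ k.1 ≠ z₂ := by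
    simpa only [Finset.mem_insert, Finset.mem_singleton, not_or] using hk
  have hxb0 : ∀ a, a ∉ ({z₁, z₂} : Finset V) → xb a = 0 := fun a ha => xb_P z₁ z₂ a ha
  have hxbi : xb i.1 = 0 := hxb0 _ hi
  have hxb1 : xb z₁ = -1 := xb_z₁ z₁ z₂
  have hxb2 : xb z₂ = 1 := xb_z₂ z₁ z₂ hzz
  -- weights at xb
  have hwt1 : SBCM.wt G γ δ xb i.1 z₁ = if G.Adj i.1 z₁ then vv γ δ else 0 := by
    rw [SBCM.wt, hxbi, hxb1]
    unfold vv
    norm_num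
  have hwt2 : SBCM.wt G γ δ xb i.1 z₂ = if G.Adj i.1 z₂ then vv γ δ else 0 := by
    rw [SBCM.wt, hxbi, hxb2]
    unfold vv
    norm_num
  have hwtP : ∀ j : V, j ∉ ({z₁, z₂} : Finset V) → SBCM.wt G γ δ xb i.1 j = if G.Adj i.1 j then w0 γ δ else 0 := by
    intro j hj
    rw [SBCM.wt, hxbi, hxb0 _ hj]
    unfold w0
    norm_num
  -- gd values at xb
  have hgdP : ∀ j, j ∉ ({z₁, z₂} : Finset V) → gd γ δ (xb i.1 - xb j) = 0 := by
    intro j hj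
    rw [hxbi, hxb0 _ hj]
    unfold gd
    norm_num
  have hgd1 : gd γ δ (xb i.1 - xb z₁) = gone γ δ := by
    rw [hxbi, hxb1]
    unfold gd gone
    norm_num
  have hgd2 : gd γ δ (xb i.1 - xb z₂) = -gone γ δ := by
    rw [hxbi, hxb2]
    unfold gd gone
    norm_num
    ring
  -- the direction vector
  set e : V → ℝ := Pi.single k.1 (1:ℝ) with he
  have he_val : ∀ a : V, e a = if a = k.1 then 1 else 0 := by
    intro a
    rw [he, Pi.single_apply]
  have hez₁ : e z₁ = 0 := by rw [he_val]; simp [Ne.symm hkz.1]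
  have hez₂ : e z₂ = 0 := by rw [he_val]; simp [Ne.symm hkz.2]
  -- derivative CLMs
  set L : V → ((V → ℝ) →L[ℝ] ℝ) := fun j =>
    if G.Adj i.1 j then
      gd γ δ (xb i.1 - xb j) •
        ((ContinuousLinearMap.proj i.1 : (V → ℝ) →L[ℝ] ℝ) - ContinuousLinearMap.proj j)
    else 0 with hL
  have hW : ∀ j : V, HasFDerivAt (fun y : V → ℝ => SBCM.wt G γ δ y i.1 j) (L j) xb :=
    fun j => hasFDerivAt_wt G γ δ xb i.1 j
  have hsub : ∀ j : V, HasFDerivAt (fun y : V → ℝ => y j - y i.1)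
      ((ContinuousLinearMap.proj j : (V → ℝ) →L[ℝ] ℝ) - ContinuousLinearMap.proj i.1) xb := by
    intro j
    have := ((ContinuousLinearMap.proj (R := ℝ) (φ := fun _ : V => ℝ) j).hasFDerivAt
      (x := xb)).sub ((ContinuousLinearMap.proj (R := ℝ) (φ := fun _ : V => ℝ) i.1).hasFDerivAt
      (x := xb))
    exact this
  have hNder : HasFDerivAt (fun y : V → ℝ => ∑ j, SBCM.wt G γ δ y i.1 j * (y j - y i.1))
      (∑ j, (SBCM.wt G γ δ xb i.1 j •
          ((ContinuousLinearMap.proj j : (V → ℝ) →L[ℝ] ℝ) - ContinuousLinearMap.proj i.1)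
        + (xb j - xb i.1) • L j)) xb :=
    HasFDerivAt.fun_sum fun j _ => (hW j).mul (hsub j)
  have hDder : HasFDerivAt (fun y : V → ℝ => ∑ j, SBCM.wt G γ δ y i.1 j) (∑ j, L j) xb :=
    HasFDerivAt.fun_sum fun j _ => hW j
  -- values at xb
  have hDval : (∑ j, SBCM.wt G γ δ xb i.1 j) = sD G z₁ z₂ γ δ i.1 := by
    rw [sum_split z₁ z₂ hzz, hwt1, hwt2,
      Finset.sum_congr rfl fun (j : {v : V // v ∉ ({z₁, z₂} : Finset V)}) _ => hwtP j.1 j.2]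
    unfold sD dPw bi
    by_cases hb : G.Adj i.1 z₁
    · rw [if_pos hb, if_pos ((hBE i.1 hi).mp hb), if_pos hb]; ring
    · rw [if_neg hb, if_neg (fun h2 => hb ((hBE i.1 hi).mpr h2)), if_neg hb]; ring
  have hNval : (∑ j, SBCM.wt G γ δ xb i.1 j * (xb j - xb i.1)) = 0 := by
    rw [sum_split z₁ z₂ hzz,
      Finset.sum_congr rfl fun (j : {v : V // v ∉ ({z₁, z₂} : Finset V)}) _ => by
        rw [hxb0 _ j.2, hxbi, sub_zero, mul_zero],
      Finset.sum_const_zero, hwt1, hwt2, hxbi, hxb1, hxb2]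
    by_cases hb : G.Adj i.1 z₁
    · rw [if_pos hb, if_pos ((hBE i.1 hi).mp hb)]; ring
    · rw [if_neg hb, if_neg (fun h2 => hb ((hBE i.1 hi).mpr h2))]; ring
  have hDne' : (∑ j, SBCM.wt G γ δ xb i.1 j) ≠ 0 := by rw [hDval]; exact hD
  have hinv : HasFDerivAt (fun y : V → ℝ => (∑ j, SBCM.wt G γ δ y i.1 j)⁻¹)
      ((-(((∑ j, SBCM.wt G γ δ xb i.1 j)) ^ 2)⁻¹) • (∑ j, L j)) xb :=
    (hasDerivAt_inv hDne').comp_hasFDerivAt xb hDder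
  have hFder := hNder.fun_mul hinv
  have hfun : (fun y : V → ℝ => SBCM.F G ({z₁, z₂} : Finset V) γ δ y i.1)
      = fun y : V → ℝ => (∑ j, SBCM.wt G γ δ y i.1 j * (y j - y i.1)) *
          (∑ j, SBCM.wt G γ δ y i.1 j)⁻¹ := by
    funext y
    rw [SBCM.F, if_neg hi, div_eq_mul_inv]
  have hJp : SBCM.Jp G ({z₁, z₂} : Finset V) γ δ xb i k
      = ((∑ j, SBCM.wt G γ δ xb i.1 j * (xb j - xb i.1)) •
            ((-(((∑ j, SBCM.wt G γ δ xb i.1 j)) ^ 2)⁻¹) • (∑ j, L j))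
          + (∑ j, SBCM.wt G γ δ xb i.1 j)⁻¹ •
            (∑ j, (SBCM.wt G γ δ xb i.1 j •
              ((ContinuousLinearMap.proj j : (V → ℝ) →L[ℝ] ℝ) - ContinuousLinearMap.proj i.1)
              + (xb j - xb i.1) • L j))) e := by
    simp only [SBCM.Jp]
    rw [hfun, hFder.fderiv]
  rw [hJp, hNval]
  simp only [zero_smul, zero_add, ContinuousLinearMap.smul_apply, smul_eq_mul]
  -- evaluate the sum CLM at e
  have happ : ((∑ j, (SBCM.wt G γ δ xb i.1 j •
        ((ContinuousLinearMap.proj j : (V → ℝ) →L[ℝ] ℝ) - ContinuousLinearMap.proj i.1)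
        + (xb j - xb i.1) • L j) : (V → ℝ) →L[ℝ] ℝ)) e
      = ∑ j, (SBCM.wt G γ δ xb i.1 j * (e j - e i.1) + (xb j - xb i.1) * (L j e)) := by
    rw [ContinuousLinearMap.sum_apply]
    refine Finset.sum_congr rfl fun j _ => ?_
    simp [ContinuousLinearMap.add_apply, ContinuousLinearMap.smul_apply,
      ContinuousLinearMap.sub_apply, ContinuousLinearMap.proj_apply]
  rw [happ]
  have hLapp : ∀ j : V, L j e = if G.Adj i.1 j then gd γ δ (xb i.1 - xb j) * (e i.1 - e j) else 0 := by
    intro j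
    by_cases hadj : G.Adj i.1 j
    · simp only [hL, if_pos hadj]
      simp [ContinuousLinearMap.smul_apply, ContinuousLinearMap.sub_apply,
        ContinuousLinearMap.proj_apply]
    · simp only [hL, if_neg hadj]
      simp
  have hsumval : (∑ j, (SBCM.wt G γ δ xb i.1 j * (e j - e i.1) + (xb j - xb i.1) * (L j e)))
      = Mm G z₁ z₂ γ δ i.1 k.1 := by
    rw [sum_split z₁ z₂ hzz]
    have hPterm : ∀ j : {v : V // v ∉ ({z₁, z₂} : Finset V)},
        SBCM.wt G γ δ xb i.1 j.1 * (e j.1 - e i.1) + (xb j.1 - xb i.1) * (L j.1 e)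
          = (if G.Adj i.1 j.1 then w0 γ δ else 0) * (e j.1 - e i.1) := by
      intro j
      rw [hwtP j.1 j.2, hxb0 _ j.2, hxbi, sub_zero, zero_mul, add_zero]
    rw [Finset.sum_congr rfl fun j _ => hPterm j]
    have hPsum : (∑ j : {v : V // v ∉ ({z₁, z₂} : Finset V)}, (if G.Adj i.1 j.1 then w0 γ δ else 0) * (e j.1 - e i.1))
        = (if G.Adj i.1 k.1 then w0 γ δ else 0)
            - (if i.1 = k.1 then (1:ℝ) else 0) * dPw G z₁ z₂ γ δ i.1 := by
      have step : ∀ j : {v : V // v ∉ ({z₁, z₂} : Finset V)},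
          (if G.Adj i.1 j.1 then w0 γ δ else 0) * (e j.1 - e i.1)
            = (if j = k then (if G.Adj i.1 k.1 then w0 γ δ else 0) else 0)
              - (if i.1 = k.1 then (1:ℝ) else 0) * (if G.Adj i.1 j.1 then w0 γ δ else 0) := by
        intro j
        rw [he_val, he_val]
        rcases eq_or_ne j k with rfl | hjk
        · simp only [eq_self_iff_true, if_true]
          ring
        · have hjk' : j.1 ≠ k.1 := fun h => hjk (Subtype.ext h)
          simp only [if_neg hjk', if_neg hjk]
          ring
      rw [Finset.sum_congr rfl fun j _ => step j, Finset.sum_sub_distrib,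
        Finset.sum_ite_eq' Finset.univ k, ← Finset.mul_sum]
      simp [dPw]
    rw [hPsum, hwt1, hwt2, hLapp z₁, hLapp z₂, hgd1, hgd2, hxb1, hxb2, hxbi, hez₁, hez₂]
    have heival : e i.1 = if i.1 = k.1 then (1:ℝ) else 0 := he_val i.1
    rw [heival]
    unfold Mm bi
    rw [cc_eq]
    by_cases hb : G.Adj i.1 z₁
    · have hb' : G.Adj i.1 z₂ := (hBE i.1 hi).mp hb
      by_cases hik : i.1 = k.1
      · simp only [if_pos hb, if_pos hb', if_pos hik]
        ring
      · simp only [if_pos hb, if_pos hb', if_neg hik]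
        ring
    · have hb' : ¬ G.Adj i.1 z₂ := fun h2 => hb ((hBE i.1 hi).mpr h2)
      by_cases hik : i.1 = k.1
      · simp only [if_neg hb, if_neg hb', if_pos hik]
        ring
      · simp only [if_neg hb, if_neg hb', if_neg hik]
        ring
  rw [hsumval, hDval]
  rw [inv_mul_eq_div]

end SBCM17

namespace SBCM17

variable {V : Type*} [Fintype V] [DecidableEq V]
variable (G : SimpleGraph V) [DecidableRel G.Adj]

open Matrix

lemma dPw_nonneg (z₁ z₂ : V) (γ δ : ℝ) (i : V) : 0 ≤ dPw G z₁ z₂ γ δ i :=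
  Finset.sum_nonneg fun j _ => by
    by_cases h : G.Adj i j.1 <;> simp [h, (w0_pos γ δ).le]

lemma sD_pos (z₁ z₂ : V)
    (hnbr : ∀ i : V, i ∉ ({z₁, z₂} : Finset V) → ∃ j, G.Adj i j)
    (hBE : ∀ i : V, i ∉ ({z₁, z₂} : Finset V) → (G.Adj i z₁ ↔ G.Adj i z₂))
    (γ δ : ℝ) (i : {v : V // v ∉ ({z₁, z₂} : Finset V)}) :
    0 < sD G z₁ z₂ γ δ i.1 := by
  have hd := dPw_nonneg G z₁ z₂ γ δ i.1
  unfold sD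
  by_cases hb : G.Adj i.1 z₁
  · rw [show bi G z₁ i.1 = 1 from if_pos hb]
    nlinarith [vv_pos γ δ]
  · obtain ⟨j, hj⟩ := hnbr i.1 i.2
    have hjz : j ∉ ({z₁, z₂} : Finset V) := by
      simp only [Finset.mem_insert, Finset.mem_singleton, not_or]
      constructor
      · rintro rfl; exact hb hj
      · rintro rfl; exact hb ((hBE i.1 i.2).mpr hj)
    have hterm : w0 γ δ ≤ dPw G z₁ z₂ γ δ i.1 := by
      unfold dPw
      have hnn : ∀ k : {v : V // v ∉ ({z₁, z₂} : Finset V)}, k ∈ Finset.univ →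
          (0:ℝ) ≤ if G.Adj i.1 k.1 then w0 γ δ else 0 := fun k _ => by
        by_cases h : G.Adj i.1 k.1 <;> simp [h, (w0_pos γ δ).le]
      have := Finset.single_le_sum hnn (Finset.mem_univ (⟨j, hjz⟩ :
        {v : V // v ∉ ({z₁, z₂} : Finset V)}))
      simpa [hj] using this
    rw [show bi G z₁ i.1 = 0 from if_neg hb]
    nlinarith [w0_pos γ δ]

lemma Mm_symm (z₁ z₂ : V) (γ δ : ℝ) (i k : V) :
    Mm G z₁ z₂ γ δ i k = Mm G z₁ z₂ γ δ k i := by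
  unfold Mm
  by_cases hik : i = k
  · subst hik; rfl
  · rw [if_neg hik, if_neg (Ne.symm hik)]
    simp only [sub_zero]
    exact if_congr (G.adj_comm i k) rfl rfl

lemma Qform (z₁ z₂ : V) (γ δ : ℝ)
    (φ : {v : V // v ∉ ({z₁, z₂} : Finset V)} → ℝ) :
    (∑ i : {v : V // v ∉ ({z₁, z₂} : Finset V)},
      ∑ k : {v : V // v ∉ ({z₁, z₂} : Finset V)}, Mm G z₁ z₂ γ δ i.1 k.1 * φ i * φ k)
      = -(w0 γ δ / 2) * (∑ i : {v : V // v ∉ ({z₁, z₂} : Finset V)},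
            ∑ k : {v : V // v ∉ ({z₁, z₂} : Finset V)},
              if G.Adj i.1 k.1 then (φ i - φ k)^2 else 0)
        - cc γ δ * ∑ i : {v : V // v ∉ ({z₁, z₂} : Finset V)}, bi G z₁ i.1 * φ i^2 := by
  classical
  have hswap : (∑ i : {v : V // v ∉ ({z₁, z₂} : Finset V)},
      ∑ k : {v : V // v ∉ ({z₁, z₂} : Finset V)}, if G.Adj i.1 k.1 then φ k^2 else 0)
      = ∑ i : {v : V // v ∉ ({z₁, z₂} : Finset V)},
        ∑ k : {v : V // v ∉ ({z₁, z₂} : Finset V)}, if G.Adj i.1 k.1 then φ i^2 else 0 := by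
    rw [Finset.sum_comm]
    exact Finset.sum_congr rfl fun i _ => Finset.sum_congr rfl fun k _ =>
      if_congr (G.adj_comm _ _) rfl rfl
  have hpt : ∀ i k : {v : V // v ∉ ({z₁, z₂} : Finset V)},
      Mm G z₁ z₂ γ δ i.1 k.1 * φ i * φ k
        = (if G.Adj i.1 k.1 then w0 γ δ * (φ i * φ k) else 0)
          - (if i = k then (dPw G z₁ z₂ γ δ i.1 + cc γ δ * bi G z₁ i.1) * (φ i * φ k) else 0) := by
    intro i k
    unfold Mm
    by_cases hik : i = k
    · subst hik
      rw [if_pos rfl, if_pos rfl]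
      by_cases h : G.Adj i.1 i.1
      · rw [if_pos h, if_pos h]; ring
      · rw [if_neg h, if_neg h]; ring
    · have hik' : i.1 ≠ k.1 := fun h => hik (Subtype.ext h)
      simp only [if_neg hik, if_neg hik']
      by_cases h : G.Adj i.1 k.1
      · simp only [if_pos h]; ring
      · simp only [if_neg h]; ring
  simp_rw [hpt, Finset.sum_sub_distrib, Finset.sum_ite_eq, Finset.mem_univ, if_true]
  have h1 : ∀ i k : {v : V // v ∉ ({z₁, z₂} : Finset V)},
      (if G.Adj i.1 k.1 then w0 γ δ * (φ i * φ k) else 0)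
        = w0 γ δ * (if G.Adj i.1 k.1 then φ i * φ k else 0) := by
    intro i k
    by_cases h : G.Adj i.1 k.1
    · simp only [if_pos h]
    · simp only [if_neg h]; ring
  have h2 : ∀ i : {v : V // v ∉ ({z₁, z₂} : Finset V)},
      (dPw G z₁ z₂ γ δ i.1 + cc γ δ * bi G z₁ i.1) * (φ i * φ i)
        = (∑ k : {v : V // v ∉ ({z₁, z₂} : Finset V)},
            w0 γ δ * (if G.Adj i.1 k.1 then φ i^2 else 0)) + cc γ δ * (bi G z₁ i.1 * φ i^2) := by
    intro i
    unfold dPw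
    rw [add_mul, Finset.sum_mul]
    congr 1
    · refine Finset.sum_congr rfl fun k _ => ?_
      by_cases h : G.Adj i.1 k.1
      · simp only [if_pos h]; ring
      · simp only [if_neg h]; ring
    · ring
  simp_rw [h1, h2, Finset.sum_add_distrib, ← Finset.mul_sum]
  have hexp : ∀ i k : {v : V // v ∉ ({z₁, z₂} : Finset V)},
      (if G.Adj i.1 k.1 then (φ i - φ k)^2 else 0)
        = (if G.Adj i.1 k.1 then φ i^2 else 0) + (if G.Adj i.1 k.1 then φ k^2 else 0)
          - 2 * (if G.Adj i.1 k.1 then φ i * φ k else 0) := by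
    intro i k
    by_cases h : G.Adj i.1 k.1
    · simp only [if_pos h]; ring
    · simp only [if_neg h]; ring
  simp_rw [hexp, Finset.sum_sub_distrib, Finset.sum_add_distrib, ← Finset.mul_sum, hswap]
  ring

lemma walk_const {S : Set V} (hconn : (G.induce S).Connected) (φ : S → ℝ)
    (h : ∀ a b : S, G.Adj a.1 b.1 → φ a = φ b) (a b : S) : φ a = φ b := by
  obtain ⟨w⟩ := hconn.preconnected a b
  induction w with
  | nil => rfl
  | cons h' p ih => exact (h _ _ (by simpa using h')).trans ih

lemma exists_nonneg_eig {n : Type*} [Fintype n] [DecidableEq n]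
    (S : Matrix n n ℝ) (hS : S.IsHermitian) (ψ : n → ℝ) (hψ : ψ ≠ 0)
    (hq : 0 ≤ ψ ⬝ᵥ (S *ᵥ ψ)) :
    ∃ (μ : ℝ) (u : n → ℝ), 0 ≤ μ ∧ u ≠ 0 ∧ S *ᵥ u = μ • u := by
  classical
  by_cases hex : ∃ j, 0 ≤ hS.eigenvalues j
  · obtain ⟨j, hj⟩ := hex
    refine ⟨hS.eigenvalues j, hS.eigenvectorBasis j, hj, ?_, hS.mulVec_eigenvectorBasis j⟩
    intro hc
    apply hS.eigenvectorBasis.orthonormal.ne_zero j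
    ext x
    exact congrFun hc x
  · push_neg at hex
    exfalso
    set U : Matrix n n ℝ := (hS.eigenvectorUnitary : Matrix n n ℝ) with hU
    have hUU : U * star U = 1 := (Matrix.mem_unitaryGroup_iff).mp hS.eigenvectorUnitary.2
    set y : n → ℝ := star U *ᵥ ψ with hy
    have hyne : y ≠ 0 := by
      intro h0
      apply hψ
      have hrec : U *ᵥ y = ψ := by
        rw [hy, Matrix.mulVec_mulVec, hUU, Matrix.one_mulVec]
      rw [← hrec, h0, Matrix.mulVec_zero]
    have hformula : ψ ⬝ᵥ (S *ᵥ ψ) = ∑ j, hS.eigenvalues j * (y j)^2 := by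
      conv_lhs => rw [hS.spectral_theorem, Unitary.conjStarAlgAut_apply]
      rw [← Matrix.mulVec_mulVec, ← Matrix.mulVec_mulVec, dotProduct_mulVec]
      have hst : star U = Uᵀ := by
        ext a b; simp [Matrix.conjTranspose_apply]
      have hvm : ψ ᵥ* U = y := by
        rw [hy, hst, Matrix.mulVec_transpose]
      rw [hvm]
      have hdiag : (Matrix.diagonal (RCLike.ofReal ∘ hS.eigenvalues) : Matrix n n ℝ) *ᵥ (star U *ᵥ ψ)
          = fun j => hS.eigenvalues j * y j := by
        funext j
        rw [Matrix.mulVec_diagonal]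
        simp [hy]
      rw [hdiag]
      simp only [dotProduct]
      exact Finset.sum_congr rfl fun j _ => by rw [hy]; ring
    rw [hformula] at hq
    have hlt : ∑ j, hS.eigenvalues j * (y j)^2 < 0 := by
      obtain ⟨j0, hj0⟩ := Function.ne_iff.mp hyne
      have hle : ∀ j ∈ Finset.univ, hS.eigenvalues j * (y j)^2 ≤ (fun _ => (0:ℝ)) j :=
        fun j _ => mul_nonpos_of_nonpos_of_nonneg (hex j).le (sq_nonneg _)
      have hstrict : hS.eigenvalues j0 * (y j0)^2 < 0 := by
        have : (0:ℝ) < (y j0)^2 := (sq_nonneg _).lt_of_ne (Ne.symm (pow_ne_zero 2 hj0))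
        nlinarith [hex j0]
      calc (∑ j, hS.eigenvalues j * (y j)^2) < ∑ _j : n, (0:ℝ) :=
            Finset.sum_lt_sum hle ⟨j0, Finset.mem_univ _, hstrict⟩
        _ = 0 := by simp
    linarith

end SBCM17

open Matrix in
/-- On a balanced-exposure graph with connected persuadable subgraph and
at least one persuadable node adjacent to the two zealots, with `v = ω(1)`: if
`1 − 2γ(1 − v) > 0` the harmonic state is linearly stable, and if `1 − 2γ(1 − v) ≤ 0`
the Jacobian block has a nonnegative eigenvalue, so it is not linearly stable. -/
theorem stmt_17 {V : Type*} [Fintype V] [DecidableEq V]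
    (G : SimpleGraph V) [DecidableRel G.Adj] (z₁ z₂ : V) (hzz : z₁ ≠ z₂)
    (hnbr : ∀ i : V, i ∉ ({z₁, z₂} : Finset V) → ∃ j, G.Adj i j)
    (hBE : ∀ i : V, i ∉ ({z₁, z₂} : Finset V) → (G.Adj i z₁ ↔ G.Adj i z₂))
    (hconn : (G.induce {v : V | v ∉ ({z₁, z₂} : Finset V)}).Connected)
    (hadj : ∃ i : V, i ∉ ({z₁, z₂} : Finset V) ∧ G.Adj i z₁ ∧ G.Adj i z₂)
    (γ δ : ℝ) (hγ : 0 ≤ γ) (hδ : 0 ≤ δ) :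
    (0 < 1 - 2 * γ * (1 - 1 / (1 + Real.exp (γ * (1 - δ)))) →
      SBCM.LinStable
        (SBCM.Jp G ({z₁, z₂} : Finset V) γ δ (SBCM.xbarBE z₁ z₂))) ∧
    (1 - 2 * γ * (1 - 1 / (1 + Real.exp (γ * (1 - δ)))) ≤ 0 →
      ∃ μ : ℝ, 0 ≤ μ ∧
        SBCM.HasEig (SBCM.Jp G ({z₁, z₂} : Finset V) γ δ (SBCM.xbarBE z₁ z₂)) μ) := by

  classical
  obtain ⟨i₀v, hi₀, hadjz₁, hadjz₂⟩ := hadj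
  have hsD : ∀ i : {v : V // v ∉ ({z₁, z₂} : Finset V)}, 0 < SBCM17.sD G z₁ z₂ γ δ i.1 :=
    fun i => SBCM17.sD_pos G z₁ z₂ hnbr hBE γ δ i
  have hJ : ∀ i k : {v : V // v ∉ ({z₁, z₂} : Finset V)},
      SBCM.Jp G ({z₁, z₂} : Finset V) γ δ (SBCM.xbarBE z₁ z₂) i k
        = SBCM17.Mm G z₁ z₂ γ δ i.1 k.1 / SBCM17.sD G z₁ z₂ γ δ i.1 :=
    fun i k => SBCM17.Jp_eval G z₁ z₂ hzz hBE γ δ i k (hsD i).ne'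
  have hvv : 1 / (1 + Real.exp (γ * (1 - δ))) = SBCM17.vv γ δ := by
    rw [show γ * (1 - δ) = γ - γ * δ by ring]; rfl
  have hccform : SBCM17.cc γ δ
      = 2 * SBCM17.vv γ δ * (1 - 2 * γ * (1 - SBCM17.vv γ δ)) := by
    unfold SBCM17.cc; ring
  have hbinn : ∀ i : {v : V // v ∉ ({z₁, z₂} : Finset V)},
      ∀ (ρ : ℝ), 0 ≤ SBCM17.bi G z₁ i.1 * ρ ^ 2 := by
    intro i ρ
    unfold SBCM17.bi
    by_cases h : G.Adj i.1 z₁ <;> simp [h, sq_nonneg]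
  constructor
  · -- stability
    intro hpos
    rw [hvv] at hpos
    have hccpos : 0 < SBCM17.cc γ δ := by
      rw [hccform]
      exact mul_pos (by nlinarith [SBCM17.vv_pos γ δ]) hpos
    intro μ hEig
    obtain ⟨φ, hφne, hmul⟩ := hEig
    have hrow : ∀ i : {v : V // v ∉ ({z₁, z₂} : Finset V)},
        (∑ k, SBCM17.Mm G z₁ z₂ γ δ i.1 k.1 * φ k)
          = μ * (SBCM17.sD G z₁ z₂ γ δ i.1 * φ i) := by
      intro i
      have h1 : (∑ k, SBCM.Jp G ({z₁, z₂} : Finset V) γ δ (SBCM.xbarBE z₁ z₂) i k * φ k)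
          = μ * φ i := by
        have := congrFun hmul i
        simpa [Matrix.mulVec, dotProduct, Pi.smul_apply, smul_eq_mul] using this
      rw [Finset.sum_congr rfl (fun k _ => by rw [hJ i k])] at h1
      have hs := (hsD i).ne'
      calc (∑ k, SBCM17.Mm G z₁ z₂ γ δ i.1 k.1 * φ k)
          = (∑ k, SBCM17.Mm G z₁ z₂ γ δ i.1 k.1 / SBCM17.sD G z₁ z₂ γ δ i.1 * φ k)
              * SBCM17.sD G z₁ z₂ γ δ i.1 := by
            rw [Finset.sum_mul]
            exact Finset.sum_congr rfl fun k _ => by field_simp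
        _ = (μ * φ i) * SBCM17.sD G z₁ z₂ γ δ i.1 := by rw [h1]
        _ = μ * (SBCM17.sD G z₁ z₂ γ δ i.1 * φ i) := by ring
    have hT : (∑ i, ∑ k, SBCM17.Mm G z₁ z₂ γ δ i.1 k.1 * φ i * φ k)
        = μ * ∑ i, SBCM17.sD G z₁ z₂ γ δ i.1 * φ i ^ 2 := by
      rw [Finset.mul_sum]
      refine Finset.sum_congr rfl fun i _ => ?_
      calc (∑ k, SBCM17.Mm G z₁ z₂ γ δ i.1 k.1 * φ i * φ k)
          = φ i * ∑ k, SBCM17.Mm G z₁ z₂ γ δ i.1 k.1 * φ k := by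
            rw [Finset.mul_sum]
            exact Finset.sum_congr rfl fun k _ => by ring
        _ = φ i * (μ * (SBCM17.sD G z₁ z₂ γ δ i.1 * φ i)) := by rw [hrow i]
        _ = μ * (SBCM17.sD G z₁ z₂ γ δ i.1 * φ i ^ 2) := by ring
    have hQ := SBCM17.Qform G z₁ z₂ γ δ φ
    obtain ⟨a, ha⟩ := Function.ne_iff.mp hφne
    have hX : 0 < ∑ i, SBCM17.sD G z₁ z₂ γ δ i.1 * φ i ^ 2 := by
      refine Finset.sum_pos' (fun i _ => mul_nonneg (hsD i).le (sq_nonneg _))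
        ⟨a, Finset.mem_univ a, ?_⟩
      exact mul_pos (hsD a) ((sq_nonneg _).lt_of_ne (Ne.symm (pow_ne_zero 2 ha)))
    have hA2 : 0 ≤ ∑ i : {v : V // v ∉ ({z₁, z₂} : Finset V)},
        ∑ k : {v : V // v ∉ ({z₁, z₂} : Finset V)},
          if G.Adj i.1 k.1 then (φ i - φ k) ^ 2 else 0 :=
      Finset.sum_nonneg fun i _ => Finset.sum_nonneg fun k _ => by
        by_cases h : G.Adj i.1 k.1 <;> simp [h, sq_nonneg]
    have hB2 : 0 ≤ ∑ i : {v : V // v ∉ ({z₁, z₂} : Finset V)}, SBCM17.bi G z₁ i.1 * φ i ^ 2 :=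
      Finset.sum_nonneg fun i _ => hbinn i (φ i)
    have hTneg : (∑ i, ∑ k, SBCM17.Mm G z₁ z₂ γ δ i.1 k.1 * φ i * φ k) < 0 := by
      rw [hQ]
      by_cases hflat : ∀ a' b' : {v : V // v ∉ ({z₁, z₂} : Finset V)},
          G.Adj a'.1 b'.1 → φ a' = φ b'
      · have hconst : ∀ b : {v : V // v ∉ ({z₁, z₂} : Finset V)}, φ b = φ a :=
          fun b => SBCM17.walk_const G hconn φ hflat b a
        have hb2pos : 0 < ∑ i : {v : V // v ∉ ({z₁, z₂} : Finset V)},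
            SBCM17.bi G z₁ i.1 * φ i ^ 2 := by
          refine Finset.sum_pos' (fun i _ => hbinn i (φ i))
            ⟨⟨i₀v, hi₀⟩, Finset.mem_univ _, ?_⟩
          have hbi : SBCM17.bi G z₁ (⟨i₀v, hi₀⟩ :
              {v : V // v ∉ ({z₁, z₂} : Finset V)}).1 = 1 := if_pos hadjz₁
          rw [hbi, one_mul, hconst ⟨i₀v, hi₀⟩]
          exact (sq_nonneg _).lt_of_ne (Ne.symm (pow_ne_zero 2 ha))
        nlinarith [SBCM17.w0_pos γ δ, hA2]
      · push_neg at hflat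
        obtain ⟨a', b', hab, hne⟩ := hflat
        have hA2pos : 0 < ∑ i : {v : V // v ∉ ({z₁, z₂} : Finset V)},
            ∑ k : {v : V // v ∉ ({z₁, z₂} : Finset V)},
              if G.Adj i.1 k.1 then (φ i - φ k) ^ 2 else 0 := by
          refine Finset.sum_pos' (fun i _ => Finset.sum_nonneg fun k _ => by
              by_cases h : G.Adj i.1 k.1 <;> simp [h, sq_nonneg])
            ⟨a', Finset.mem_univ _, ?_⟩
          refine Finset.sum_pos' (fun k _ => by
              by_cases h : G.Adj a'.1 k.1 <;> simp [h, sq_nonneg])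
            ⟨b', Finset.mem_univ _, ?_⟩
          rw [if_pos hab]
          have hsub : φ a' - φ b' ≠ 0 := sub_ne_zero.mpr hne
          exact (sq_nonneg _).lt_of_ne (Ne.symm (pow_ne_zero 2 hsub))
        nlinarith [SBCM17.w0_pos γ δ, hccpos, hB2]
    have hμX : μ * (∑ i, SBCM17.sD G z₁ z₂ γ δ i.1 * φ i ^ 2) < 0 := hT ▸ hTneg
    by_contra hge
    push_neg at hge
    nlinarith [mul_nonneg hge hX.le]
  · -- instability
    intro hle
    rw [hvv] at hle
    have hccle : SBCM17.cc γ δ ≤ 0 := by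
      rw [hccform]
      nlinarith [SBCM17.vv_pos γ δ]
    set sq : {v : V // v ∉ ({z₁, z₂} : Finset V)} → ℝ :=
      fun i => Real.sqrt (SBCM17.sD G z₁ z₂ γ δ i.1) with hsqdef
    have hsqpos : ∀ i, 0 < sq i := fun i => Real.sqrt_pos.mpr (hsD i)
    set S : Matrix {v : V // v ∉ ({z₁, z₂} : Finset V)}
        {v : V // v ∉ ({z₁, z₂} : Finset V)} ℝ :=
      fun i k => SBCM17.Mm G z₁ z₂ γ δ i.1 k.1 / (sq i * sq k) with hSdef
    have hSH : S.IsHermitian := by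
      ext i k
      rw [Matrix.conjTranspose_apply]
      simp only [hSdef]
      rw [star_trivial, SBCM17.Mm_symm G z₁ z₂ γ δ k.1 i.1, mul_comm (sq k) (sq i)]
    have hψne : (fun i : {v : V // v ∉ ({z₁, z₂} : Finset V)} => sq i) ≠ 0 := by
      intro h0
      exact (hsqpos ⟨i₀v, hi₀⟩).ne' (congrFun h0 ⟨i₀v, hi₀⟩)
    have hQ1 : (∑ i : {v : V // v ∉ ({z₁, z₂} : Finset V)},
        ∑ k : {v : V // v ∉ ({z₁, z₂} : Finset V)}, SBCM17.Mm G z₁ z₂ γ δ i.1 k.1)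
          = - (SBCM17.cc γ δ * ∑ i : {v : V // v ∉ ({z₁, z₂} : Finset V)},
              SBCM17.bi G z₁ i.1) := by
      have h := SBCM17.Qform G z₁ z₂ γ δ (fun _ => (1:ℝ))
      norm_num at h
      convert h using 2 <;> norm_num
    have hqnn : 0 ≤ (fun i : {v : V // v ∉ ({z₁, z₂} : Finset V)} => sq i) ⬝ᵥ
        (S *ᵥ fun i => sq i) := by
      have hval : (fun i : {v : V // v ∉ ({z₁, z₂} : Finset V)} => sq i) ⬝ᵥ
          (S *ᵥ fun i => sq i)
          = ∑ i : {v : V // v ∉ ({z₁, z₂} : Finset V)},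
              ∑ k : {v : V // v ∉ ({z₁, z₂} : Finset V)}, SBCM17.Mm G z₁ z₂ γ δ i.1 k.1 := by
        simp only [dotProduct, Matrix.mulVec]
        refine Finset.sum_congr rfl fun i _ => ?_
        rw [Finset.mul_sum]
        refine Finset.sum_congr rfl fun k _ => ?_
        simp only [hSdef]
        field_simp [(hsqpos i).ne', (hsqpos k).ne']
      rw [hval, hQ1]
      have hbnn : 0 ≤ ∑ i : {v : V // v ∉ ({z₁, z₂} : Finset V)}, SBCM17.bi G z₁ i.1 :=
        Finset.sum_nonneg fun i _ => by
          unfold SBCM17.bi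
          by_cases h : G.Adj i.1 z₁ <;> simp [h]
      nlinarith
    obtain ⟨μ, u, hμ, hune, heig⟩ := SBCM17.exists_nonneg_eig S hSH _ hψne hqnn
    refine ⟨μ, hμ, fun i => u i / sq i, ?_, ?_⟩
    · obtain ⟨a, ha⟩ := Function.ne_iff.mp hune
      intro h0
      have := congrFun h0 a
      simp only [Pi.zero_apply] at this
      exact ha ((div_eq_zero_iff.mp this).resolve_right (hsqpos a).ne')
    · funext i
      have hSrow := congrFun heig i
      simp only [Matrix.mulVec, dotProduct, Pi.smul_apply, smul_eq_mul] at hSrow ⊢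
      rw [Finset.sum_congr rfl (fun k _ => by rw [hJ i k])]
      have hss : SBCM17.sD G z₁ z₂ γ δ i.1 = sq i * sq i :=
        (Real.mul_self_sqrt (hsD i).le).symm
      calc (∑ k, SBCM17.Mm G z₁ z₂ γ δ i.1 k.1 / SBCM17.sD G z₁ z₂ γ δ i.1 * (u k / sq k))
          = (∑ k, S i k * u k) / sq i := by
            rw [Finset.sum_div]
            refine Finset.sum_congr rfl fun k _ => ?_
            simp only [hSdef]
            rw [hss]
            have habs : ∀ (a s t : ℝ), s ≠ 0 → t ≠ 0 →
                a / (s * s) * (u k / t) = a / (s * t) * u k / s := by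
              intro a s t hs ht
              rw [div_mul_div_comm, div_mul_eq_mul_div, div_div, div_eq_div_iff
                (by positivity) (by positivity)]
              ring
            exact habs _ _ _ (hsqpos i).ne' (hsqpos k).ne'
        _ = (μ * u i) / sq i := by rw [hSrow]
        _ = μ * (u i / sq i) := by ring
end

section
/- Suppose 𝒢 has exactly two zealots, with fixed opinions −1 and +1, every persuadable node is adjacent to both zealots, and the subgraph induced on the persuadable nodes 𝒫 is d-regular. Let L_𝒫 be the combinatorial Laplacian of the persuadable subgraph, u = ω(0), and v = ω(1). Then a nonzero vector φ ∈ ℝ^𝒫 is an eigenvector of the Jacobian block J_𝒫(x̄) at the harmonic state x̄ with nonnegative eigenvalue if and only if φ is an eigenvector of L_𝒫 with eigenvalue λ satisfying λ ≤ −2v(1 − 2γ(1 − v))/u. In particular, the space of unstable directions of J_𝒫(x̄) is spanned by the eigenvectors of L_𝒫 whose eigenvalues satisfy this bound. -/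
open Finset Filter

namespace SBCM

/-- The combinatorial Laplacian of the subgraph induced on the persuadable nodes. -/
noncomputable def Lp {V : Type*} [Fintype V] [DecidableEq V] (G : SimpleGraph V)
    [DecidableRel G.Adj] (Z : Finset V) :
    Matrix {v : V // v ∉ Z} {v : V // v ∉ Z} ℝ :=
  fun i j =>
    (if i = j then
        ((Finset.univ.filter fun k : {v : V // v ∉ Z} => G.Adj i.1 k.1).card : ℝ)
      else 0)
    - (if G.Adj i.1 j.1 then 1 else 0)

end SBCM


namespace SBCM

variable {V : Type*} [Fintype V] [DecidableEq V]

lemma hasDerivAt_sig (γ δ t : ℝ) :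
    HasDerivAt (fun s : ℝ => 1 / (1 + Real.exp (γ * s ^ 2 - γ * δ)))
      (-(2 * γ * t * Real.exp (γ * t ^ 2 - γ * δ)) /
        (1 + Real.exp (γ * t ^ 2 - γ * δ)) ^ 2) t := by
  have h1 : HasDerivAt (fun s : ℝ => γ * s ^ 2 - γ * δ) (2 * γ * t) t := by
    have h := ((hasDerivAt_pow 2 t).const_mul γ).sub_const (γ * δ)
    exact h.congr_deriv (by simp; ring)
  have h2 : HasDerivAt (fun s : ℝ => 1 + Real.exp (γ * s ^ 2 - γ * δ))
      (Real.exp (γ * t ^ 2 - γ * δ) * (2 * γ * t)) t :=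
    ((Real.hasDerivAt_exp _).comp t h1).const_add 1
  have hne : (1 + Real.exp (γ * t ^ 2 - γ * δ)) ≠ 0 := by positivity
  have h3 := h2.inv hne
  have h4 : HasDerivAt (fun s : ℝ => 1 / (1 + Real.exp (γ * s ^ 2 - γ * δ)))
      (-(Real.exp (γ * t ^ 2 - γ * δ) * (2 * γ * t)) /
        (1 + Real.exp (γ * t ^ 2 - γ * δ)) ^ 2) t := by
    simpa [one_div, Pi.inv_def] using h3
  convert h4 using 1
  ring

noncomputable def dwt (G : SimpleGraph V) [DecidableRel G.Adj] (γ δ : ℝ) (x : V → ℝ)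
    (i j : V) : (V → ℝ) →L[ℝ] ℝ :=
  if G.Adj i j then
    (-(2 * γ * (x i - x j) * Real.exp (γ * (x i - x j) ^ 2 - γ * δ)) /
      (1 + Real.exp (γ * (x i - x j) ^ 2 - γ * δ)) ^ 2) •
      ((ContinuousLinearMap.proj i : (V → ℝ) →L[ℝ] ℝ) - ContinuousLinearMap.proj j)
  else 0

lemma dwt_apply (G : SimpleGraph V) [DecidableRel G.Adj] (γ δ : ℝ) (x : V → ℝ)
    (i j : V) (e : V → ℝ) :
    dwt G γ δ x i j e =
      if G.Adj i j then
        (-(2 * γ * (x i - x j) * Real.exp (γ * (x i - x j) ^ 2 - γ * δ)) /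
          (1 + Real.exp (γ * (x i - x j) ^ 2 - γ * δ)) ^ 2) * (e i - e j)
      else 0 := by
  unfold dwt
  split_ifs with h <;> simp [smul_eq_mul]

lemma hasFDerivAt_wt (G : SimpleGraph V) [DecidableRel G.Adj] (γ δ : ℝ) (x : V → ℝ)
    (i j : V) :
    HasFDerivAt (fun y => wt G γ δ y i j) (dwt G γ δ x i j) x := by
  by_cases h : G.Adj i j
  · simp only [wt, dwt, if_pos h]
    have hlin : HasFDerivAt (fun y : V → ℝ => y i - y j)
        ((ContinuousLinearMap.proj i : (V → ℝ) →L[ℝ] ℝ) - ContinuousLinearMap.proj j) x :=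
      (ContinuousLinearMap.proj i : (V → ℝ) →L[ℝ] ℝ).hasFDerivAt.sub
        (ContinuousLinearMap.proj j : (V → ℝ) →L[ℝ] ℝ).hasFDerivAt
    have := (hasDerivAt_sig γ δ (x i - x j)).comp_hasFDerivAt x hlin
    simpa [Function.comp_def] using this
  · simp only [wt, dwt, if_neg h]
    exact hasFDerivAt_const 0 x

lemma jp_eq_sum (G : SimpleGraph V) [DecidableRel G.Adj] (Z : Finset V) (γ δ : ℝ)
    (x : V → ℝ) (i k : {v : V // v ∉ Z})
    (hS0 : (∑ j, wt G γ δ x i.1 j) ≠ 0)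
    (hN0 : (∑ j, wt G γ δ x i.1 j * (x j - x i.1)) = 0) :
    Jp G Z γ δ x i k =
      (∑ j, (wt G γ δ x i.1 j *
          ((Pi.single (k : V) (1 : ℝ) : V → ℝ) j - (Pi.single (k : V) (1 : ℝ) : V → ℝ) i.1) +
        (x j - x i.1) * dwt G γ δ x i.1 j (Pi.single (k : V) (1 : ℝ)))) /
      (∑ j, wt G γ δ x i.1 j) := by
  have hN : HasFDerivAt (fun y => ∑ j, wt G γ δ y i.1 j * (y j - y i.1))
      (∑ j, (wt G γ δ x i.1 j •
          ((ContinuousLinearMap.proj j : (V → ℝ) →L[ℝ] ℝ) - ContinuousLinearMap.proj i.1) +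
        (x j - x i.1) • dwt G γ δ x i.1 j)) x :=
    HasFDerivAt.fun_sum fun j _ => (hasFDerivAt_wt G γ δ x i.1 j).mul
      ((ContinuousLinearMap.proj j : (V → ℝ) →L[ℝ] ℝ).hasFDerivAt.sub
        (ContinuousLinearMap.proj i.1 : (V → ℝ) →L[ℝ] ℝ).hasFDerivAt)
  have hS : HasFDerivAt (fun y => ∑ j, wt G γ δ y i.1 j)
      (∑ j, dwt G γ δ x i.1 j) x :=
    HasFDerivAt.fun_sum fun j _ => hasFDerivAt_wt G γ δ x i.1 j
  have hinv : HasFDerivAt (fun y => (∑ j, wt G γ δ y i.1 j)⁻¹)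
      (-(((∑ j, wt G γ δ x i.1 j) ^ 2)⁻¹ • ∑ j, dwt G γ δ x i.1 j)) x := by
    have := (hasDerivAt_inv hS0).comp_hasFDerivAt x hS
    simpa [Function.comp_def, neg_smul] using this
  have hF : HasFDerivAt (fun y => F G Z γ δ y i.1)
      ((∑ j, wt G γ δ x i.1 j * (x j - x i.1)) •
          (-(((∑ j, wt G γ δ x i.1 j) ^ 2)⁻¹ • ∑ j, dwt G γ δ x i.1 j)) +
        (∑ j, wt G γ δ x i.1 j)⁻¹ •
          (∑ j, (wt G γ δ x i.1 j •
              ((ContinuousLinearMap.proj j : (V → ℝ) →L[ℝ] ℝ) -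
                ContinuousLinearMap.proj i.1) +
            (x j - x i.1) • dwt G γ δ x i.1 j))) x := by
    have heq : (fun y => F G Z γ δ y i.1) =
        fun y => (∑ j, wt G γ δ y i.1 j * (y j - y i.1)) * (∑ j, wt G γ δ y i.1 j)⁻¹ := by
      funext y
      rw [F, if_neg i.2, div_eq_mul_inv]
    rw [heq]
    exact hN.mul hinv
  rw [Jp, hF.fderiv]
  rw [hN0]
  simp only [zero_smul, zero_add, ContinuousLinearMap.smul_apply,
    ContinuousLinearMap.sum_apply, ContinuousLinearMap.add_apply,
    ContinuousLinearMap.sub_apply, ContinuousLinearMap.proj_apply, smul_eq_mul]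
  rw [div_eq_inv_mul]

end SBCM

namespace SBCM

variable {V : Type*} [Fintype V] [DecidableEq V]

section Harmonic

variable (G : SimpleGraph V) [DecidableRel G.Adj] (z₁ z₂ : V) (γ δ : ℝ)

lemma xbar_z1 : xbarBE z₁ z₂ z₁ = -1 := by simp [xbarBE]

lemma xbar_z2 (hzz : z₁ ≠ z₂) : xbarBE z₁ z₂ z₂ = 1 := by
  simp [xbarBE, hzz.symm]

lemma xbar_p {w : V} (hw : w ∉ ({z₁, z₂} : Finset V)) : xbarBE z₁ z₂ w = 0 := by
  simp only [Finset.mem_insert, Finset.mem_singleton, not_or] at hw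
  simp [xbarBE, hw.1, hw.2]

lemma wt_z1 (hadj : ∀ i : V, i ∉ ({z₁, z₂} : Finset V) → G.Adj i z₁ ∧ G.Adj i z₂)
    (i : {v : V // v ∉ ({z₁, z₂} : Finset V)}) :
    wt G γ δ (xbarBE z₁ z₂) i.1 z₁ = 1 / (1 + Real.exp (γ * (1 - δ))) := by
  rw [wt, if_pos (hadj i.1 i.2).1, xbar_p z₁ z₂ i.2, xbar_z1]
  norm_num
  ring_nf

lemma wt_z2 (hzz : z₁ ≠ z₂)
    (hadj : ∀ i : V, i ∉ ({z₁, z₂} : Finset V) → G.Adj i z₁ ∧ G.Adj i z₂)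
    (i : {v : V // v ∉ ({z₁, z₂} : Finset V)}) :
    wt G γ δ (xbarBE z₁ z₂) i.1 z₂ = 1 / (1 + Real.exp (γ * (1 - δ))) := by
  rw [wt, if_pos (hadj i.1 i.2).2, xbar_p z₁ z₂ i.2, xbar_z2 z₁ z₂ hzz]
  norm_num
  ring_nf

lemma wt_p (i : {v : V // v ∉ ({z₁, z₂} : Finset V)}) {j : V}
    (hj : j ∉ ({z₁, z₂} : Finset V)) :
    wt G γ δ (xbarBE z₁ z₂) i.1 j =
      if G.Adj i.1 j then 1 / (1 + Real.exp (-(γ * δ))) else 0 := by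
  rw [wt, xbar_p z₁ z₂ i.2, xbar_p z₁ z₂ hj]
  norm_num

lemma sum_wt_val (hzz : z₁ ≠ z₂)
    (hadj : ∀ i : V, i ∉ ({z₁, z₂} : Finset V) → G.Adj i z₁ ∧ G.Adj i z₂)
    (d : ℕ)
    (hreg : ∀ i : {v : V // v ∉ ({z₁, z₂} : Finset V)},
      (Finset.univ.filter fun k : {v : V // v ∉ ({z₁, z₂} : Finset V)} =>
        G.Adj i.1 k.1).card = d)
    (i : {v : V // v ∉ ({z₁, z₂} : Finset V)}) :
    (∑ j, wt G γ δ (xbarBE z₁ z₂) i.1 j) =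
      (1 / (1 + Real.exp (-(γ * δ)))) * d + 2 * (1 / (1 + Real.exp (γ * (1 - δ)))) := by
  rw [← Finset.sum_filter_add_sum_filter_not Finset.univ (· ∈ ({z₁, z₂} : Finset V))]
  have hZ : Finset.univ.filter (· ∈ ({z₁, z₂} : Finset V)) = ({z₁, z₂} : Finset V) := by
    ext a; simp
  have h1 : ∑ j ∈ Finset.univ.filter (· ∈ ({z₁, z₂} : Finset V)),
      wt G γ δ (xbarBE z₁ z₂) i.1 j = 2 * (1 / (1 + Real.exp (γ * (1 - δ)))) := by
    rw [hZ, Finset.sum_pair hzz, wt_z1 G z₁ z₂ γ δ hadj i, wt_z2 G z₁ z₂ γ δ hzz hadj i]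
    ring
  have h2 : ∑ j ∈ Finset.univ.filter (· ∉ ({z₁, z₂} : Finset V)),
      wt G γ δ (xbarBE z₁ z₂) i.1 j =
      (1 / (1 + Real.exp (-(γ * δ)))) * d := by
    rw [Finset.sum_congr rfl (fun j hj => wt_p G z₁ z₂ γ δ i
      (Finset.mem_filter.mp hj).2)]
    rw [Finset.sum_ite, Finset.sum_const, Finset.sum_const_zero, add_zero,
      nsmul_eq_mul, mul_comm]
    congr 1
    rw [Finset.filter_filter]
    rw [← hreg i]
    norm_cast
    apply Finset.card_bij
      (fun (a : V) (ha : a ∈ Finset.univ.filter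
        fun j => j ∉ ({z₁, z₂} : Finset V) ∧ G.Adj i.1 j) =>
        (⟨a, (Finset.mem_filter.mp ha).2.1⟩ : {v : V // v ∉ ({z₁, z₂} : Finset V)}))
    · intro a ha
      simp only [Finset.mem_filter, Finset.mem_univ, true_and]
      exact (Finset.mem_filter.mp ha).2.2
    · intro a₁ h₁ a₂ h₂ h
      exact congrArg Subtype.val h
    · intro b hb
      refine ⟨b.1, ?_, rfl⟩
      simp only [Finset.mem_filter, Finset.mem_univ, true_and]
      exact ⟨b.2, (Finset.mem_filter.mp hb).2⟩
  rw [h1, h2, add_comm]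

end Harmonic

end SBCM

namespace SBCM

variable {V : Type*} [Fintype V] [DecidableEq V]

lemma jp_entry (G : SimpleGraph V) [DecidableRel G.Adj] (z₁ z₂ : V) (γ δ : ℝ)
    (hzz : z₁ ≠ z₂)
    (hadj : ∀ i : V, i ∉ ({z₁, z₂} : Finset V) → G.Adj i z₁ ∧ G.Adj i z₂)
    (i k : {v : V // v ∉ ({z₁, z₂} : Finset V)})
    (hS0 : (∑ j, wt G γ δ (xbarBE z₁ z₂) i.1 j) ≠ 0) :
    Jp G ({z₁, z₂} : Finset V) γ δ (xbarBE z₁ z₂) i k =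
      ((if G.Adj i.1 k.1 then 1 / (1 + Real.exp (-(γ * δ))) else 0) +
        (if i = k then
          4 * γ * (1 / (1 + Real.exp (γ * (1 - δ)))) *
              (1 - 1 / (1 + Real.exp (γ * (1 - δ)))) -
            (∑ j, wt G γ δ (xbarBE z₁ z₂) i.1 j)
          else 0)) /
      (∑ j, wt G γ δ (xbarBE z₁ z₂) i.1 j) := by
  have hxi : xbarBE z₁ z₂ i.1 = 0 := xbar_p z₁ z₂ i.2
  have hi1 : i.1 ≠ z₁ := by
    intro h; exact i.2 (by simp [h])
  have hi2 : i.1 ≠ z₂ := by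
    intro h; exact i.2 (by simp [h])
  have hN0 : (∑ j, wt G γ δ (xbarBE z₁ z₂) i.1 j * (xbarBE z₁ z₂ j - xbarBE z₁ z₂ i.1))
      = 0 := by
    rw [← Finset.sum_subset (Finset.subset_univ ({z₁, z₂} : Finset V))
      (fun j _ hj => by rw [xbar_p z₁ z₂ hj, hxi, sub_zero, mul_zero])]
    rw [Finset.sum_pair hzz, wt_z1 G z₁ z₂ γ δ hadj i, wt_z2 G z₁ z₂ γ δ hzz hadj i,
      xbar_z1, xbar_z2 z₁ z₂ hzz, hxi]
    ring
  rw [jp_eq_sum G ({z₁, z₂} : Finset V) γ δ (xbarBE z₁ z₂) i k hS0 hN0]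
  congr 1
  by_cases hik : i = k
  · subst hik
    rw [if_pos rfl, if_neg (G.irrefl), zero_add]
    rw [← Finset.sum_filter_add_sum_filter_not Finset.univ (· ∈ ({z₁, z₂} : Finset V))]
    have hZ : Finset.univ.filter (· ∈ ({z₁, z₂} : Finset V)) = ({z₁, z₂} : Finset V) := by
      ext a; simp
    have h1 : ∑ j ∈ Finset.univ.filter (· ∈ ({z₁, z₂} : Finset V)),
        (wt G γ δ (xbarBE z₁ z₂) i.1 j *
          ((Pi.single (i : V) (1 : ℝ) : V → ℝ) j - (Pi.single (i : V) (1 : ℝ) : V → ℝ) i.1) +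
        (xbarBE z₁ z₂ j - xbarBE z₁ z₂ i.1) *
          dwt G γ δ (xbarBE z₁ z₂) i.1 j (Pi.single (i : V) (1 : ℝ))) =
        -(2 * (1 / (1 + Real.exp (γ * (1 - δ))))) +
          4 * γ * (1 / (1 + Real.exp (γ * (1 - δ)))) *
            (1 - 1 / (1 + Real.exp (γ * (1 - δ)))) := by
      rw [hZ, Finset.sum_pair hzz]
      rw [wt_z1 G z₁ z₂ γ δ hadj i, wt_z2 G z₁ z₂ γ δ hzz hadj i,
        dwt_apply, dwt_apply, if_pos (hadj i.1 i.2).1, if_pos (hadj i.1 i.2).2,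
        xbar_z1, xbar_z2 z₁ z₂ hzz, hxi,
        Pi.single_eq_same, Pi.single_eq_of_ne hi1.symm, Pi.single_eq_of_ne hi2.symm]
      have e1 : γ * ((0:ℝ) - -1) ^ 2 - γ * δ = γ * (1 - δ) := by ring
      have e2 : γ * ((0:ℝ) - 1) ^ 2 - γ * δ = γ * (1 - δ) := by ring
      rw [e1, e2]
      have hE : (0:ℝ) < 1 + Real.exp (γ * (1 - δ)) := by positivity
      field_simp
      ring
    have h2 : ∑ j ∈ Finset.univ.filter (· ∉ ({z₁, z₂} : Finset V)),
        (wt G γ δ (xbarBE z₁ z₂) i.1 j *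
          ((Pi.single (i : V) (1 : ℝ) : V → ℝ) j - (Pi.single (i : V) (1 : ℝ) : V → ℝ) i.1) +
        (xbarBE z₁ z₂ j - xbarBE z₁ z₂ i.1) *
          dwt G γ δ (xbarBE z₁ z₂) i.1 j (Pi.single (i : V) (1 : ℝ))) =
        -∑ j ∈ Finset.univ.filter (· ∉ ({z₁, z₂} : Finset V)),
            wt G γ δ (xbarBE z₁ z₂) i.1 j := by
      rw [← Finset.sum_neg_distrib]
      apply Finset.sum_congr rfl
      intro j hj
      have hjZ : j ∉ ({z₁, z₂} : Finset V) := (Finset.mem_filter.mp hj).2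
      have hxj : xbarBE z₁ z₂ j = 0 := xbar_p z₁ z₂ hjZ
      rw [hxj, hxi, sub_zero, zero_mul, add_zero, Pi.single_eq_same]
      by_cases hji : j = i.1
      · rw [hji, Pi.single_eq_same]
        have : wt G γ δ (xbarBE z₁ z₂) i.1 i.1 = 0 := by
          rw [wt, if_neg (G.irrefl)]
        rw [this]; ring
      · rw [Pi.single_eq_of_ne hji]; ring
    rw [h1, h2]
    have hStot : (∑ j, wt G γ δ (xbarBE z₁ z₂) i.1 j) =
        2 * (1 / (1 + Real.exp (γ * (1 - δ)))) +
          ∑ j ∈ Finset.univ.filter (· ∉ ({z₁, z₂} : Finset V)),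
            wt G γ δ (xbarBE z₁ z₂) i.1 j := by
      rw [← Finset.sum_filter_add_sum_filter_not Finset.univ
        (· ∈ ({z₁, z₂} : Finset V)) (wt G γ δ (xbarBE z₁ z₂) i.1)]
      congr 1
      rw [hZ, Finset.sum_pair hzz, wt_z1 G z₁ z₂ γ δ hadj i,
        wt_z2 G z₁ z₂ γ δ hzz hadj i]
      ring
    rw [hStot]
    ring
  · have hik' : i.1 ≠ k.1 := fun h => hik (Subtype.ext h)
    rw [if_neg hik, add_zero]
    rw [Finset.sum_eq_single_of_mem (k : V) (Finset.mem_univ _)]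
    · rw [Pi.single_eq_same, Pi.single_eq_of_ne hik',
        xbar_p z₁ z₂ k.2, hxi, sub_zero, sub_zero, mul_one, zero_mul, add_zero,
        wt_p G z₁ z₂ γ δ i k.2]
    · intro j _ hjk
      rw [Pi.single_eq_of_ne hjk, Pi.single_eq_of_ne hik', sub_zero, mul_zero, zero_add,
        dwt_apply]
      split_ifs with h
      · rw [Pi.single_eq_of_ne hik', Pi.single_eq_of_ne hjk]
        ring
      · ring

end SBCM

/-- With two zealots of opinions `−1, +1`, every persuadable node adjacent
to both, and a `d`-regular persuadable subgraph with Laplacian `L_𝒫`, a nonzero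
`φ` is an eigenvector of `J_𝒫(x̄)` with nonnegative eigenvalue iff it is an eigenvector
of `L_𝒫` with eigenvalue `λ ≤ −2v(1 − 2γ(1 − v))/u`, where `u = ω(0)`, `v = ω(1)`. -/
theorem stmt_18 {V : Type*} [Fintype V] [DecidableEq V]
    (G : SimpleGraph V) [DecidableRel G.Adj] (z₁ z₂ : V) (hzz : z₁ ≠ z₂)
    (hadj : ∀ i : V, i ∉ ({z₁, z₂} : Finset V) → G.Adj i z₁ ∧ G.Adj i z₂)
    (d : ℕ)
    (hreg : ∀ i : {v : V // v ∉ ({z₁, z₂} : Finset V)},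
      (Finset.univ.filter fun k : {v : V // v ∉ ({z₁, z₂} : Finset V)} =>
        G.Adj i.1 k.1).card = d)
    (γ δ : ℝ) (hγ : 0 ≤ γ) (hδ : 0 ≤ δ) :
    ∀ φ : {v : V // v ∉ ({z₁, z₂} : Finset V)} → ℝ, φ ≠ 0 →
      ((∃ μ : ℝ, 0 ≤ μ ∧
          (SBCM.Jp G ({z₁, z₂} : Finset V) γ δ (SBCM.xbarBE z₁ z₂)).mulVec φ = μ • φ) ↔
        (∃ lam : ℝ, (SBCM.Lp G ({z₁, z₂} : Finset V)).mulVec φ = lam • φ ∧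
          lam ≤ -(2 * (1 / (1 + Real.exp (γ * (1 - δ)))) *
              (1 - 2 * γ * (1 - 1 / (1 + Real.exp (γ * (1 - δ)))))) /
            (1 / (1 + Real.exp (-(γ * δ)))))) := by
  intro φ hφ
  set u0 : ℝ := 1 / (1 + Real.exp (-(γ * δ))) with hu0
  set v0 : ℝ := 1 / (1 + Real.exp (γ * (1 - δ))) with hv0
  have hu : 0 < u0 := by rw [hu0]; positivity
  have hv : 0 < v0 := by rw [hv0]; positivity
  set S : ℝ := u0 * d + 2 * v0 with hSdef
  have hS : 0 < S := by
    have : (0:ℝ) ≤ u0 * d := by positivity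
    rw [hSdef]; nlinarith
  set C0 : ℝ := 4 * γ * v0 * (1 - v0) - 2 * v0 with hC0
  have hSval : ∀ i : {v : V // v ∉ ({z₁, z₂} : Finset V)},
      (∑ j, SBCM.wt G γ δ (SBCM.xbarBE z₁ z₂) i.1 j) = S :=
    fun i => SBCM.sum_wt_val G z₁ z₂ γ δ hzz hadj d hreg i
  have hS0 : ∀ i : {v : V // v ∉ ({z₁, z₂} : Finset V)},
      (∑ j, SBCM.wt G γ δ (SBCM.xbarBE z₁ z₂) i.1 j) ≠ 0 :=
    fun i => by rw [hSval i]; exact hS.ne'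
  -- the Laplacian row sums
  have hL : ∀ i : {v : V // v ∉ ({z₁, z₂} : Finset V)},
      (SBCM.Lp G ({z₁, z₂} : Finset V)).mulVec φ i =
        (d : ℝ) * φ i - ∑ k, (if G.Adj i.1 k.1 then (1:ℝ) else 0) * φ k := by
    intro i
    simp only [Matrix.mulVec, dotProduct, SBCM.Lp, sub_mul]
    rw [Finset.sum_sub_distrib]
    congr 1
    rw [← hreg i]
    rw [Finset.sum_congr rfl (fun k _ => by
      rw [ite_mul, zero_mul] :
        ∀ k ∈ Finset.univ, _ = if i = k then
          ((Finset.univ.filter fun k' : {v : V // v ∉ ({z₁, z₂} : Finset V)} =>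
            G.Adj i.1 k'.1).card : ℝ) * φ k else 0)]
    rw [Finset.sum_ite_eq]
    simp
  -- the Jacobian row sums
  have hJ : ∀ i : {v : V // v ∉ ({z₁, z₂} : Finset V)},
      (SBCM.Jp G ({z₁, z₂} : Finset V) γ δ (SBCM.xbarBE z₁ z₂)).mulVec φ i =
        (-u0 * ((SBCM.Lp G ({z₁, z₂} : Finset V)).mulVec φ i) + C0 * φ i) / S := by
    intro i
    have hentry : ∀ k : {v : V // v ∉ ({z₁, z₂} : Finset V)},
        SBCM.Jp G ({z₁, z₂} : Finset V) γ δ (SBCM.xbarBE z₁ z₂) i k * φ k =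
        (((if G.Adj i.1 k.1 then u0 else 0) * φ k) +
          ((if i = k then 4 * γ * v0 * (1 - v0) - S else 0) * φ k)) / S := by
      intro k
      rw [SBCM.jp_entry G z₁ z₂ γ δ hzz hadj i k (hS0 i), hSval i]
      rw [div_mul_eq_mul_div, add_mul]
    rw [hL i]
    show (∑ k, SBCM.Jp G ({z₁, z₂} : Finset V) γ δ (SBCM.xbarBE z₁ z₂) i k * φ k) = _
    rw [Finset.sum_congr rfl (fun k _ => hentry k), ← Finset.sum_div]
    rw [Finset.sum_add_distrib]
    have h1 : ∑ k, (if G.Adj i.1 k.1 then u0 else 0) * φ k =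
        u0 * ∑ k, (if G.Adj i.1 k.1 then (1:ℝ) else 0) * φ k := by
      rw [Finset.mul_sum]
      apply Finset.sum_congr rfl
      intro k _
      split_ifs <;> ring
    have h2 : ∑ k, (if i = k then 4 * γ * v0 * (1 - v0) - S else 0) * φ k =
        (4 * γ * v0 * (1 - v0) - S) * φ i := by
      rw [Finset.sum_congr rfl (fun k _ => by
        rw [ite_mul, zero_mul] :
          ∀ k ∈ Finset.univ, _ =
            if i = k then (4 * γ * v0 * (1 - v0) - S) * φ k else 0)]
      rw [Finset.sum_ite_eq]
      simp
    rw [h1, h2]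
    congr 1
    rw [hC0, hSdef]
    ring
  have hBound : -(2 * v0 * (1 - 2 * γ * (1 - v0))) / u0 = C0 / u0 := by
    rw [hC0]; ring_nf
  constructor
  · rintro ⟨μ, hμ0, hμ⟩
    refine ⟨(C0 - μ * S) / u0, ?_, ?_⟩
    · funext i
      have h := congrFun hμ i
      rw [hJ i, Pi.smul_apply, smul_eq_mul] at h
      rw [div_eq_iff hS.ne'] at h
      rw [Pi.smul_apply, smul_eq_mul, div_mul_eq_mul_div, eq_div_iff hu.ne']
      linear_combination -h
    · rw [hBound]
      have hnn : 0 ≤ μ * S := mul_nonneg hμ0 hS.le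
      rw [div_le_div_iff_of_pos_right hu]
      linarith
  · rintro ⟨lam, hlam, hle⟩
    rw [hBound] at hle
    have hlu : lam * u0 ≤ C0 := by
      rw [le_div_iff₀ hu] at hle
      exact hle
    refine ⟨(C0 - u0 * lam) / S, div_nonneg (by linarith) hS.le, ?_⟩
    funext i
    have hLi := congrFun hlam i
    rw [Pi.smul_apply, smul_eq_mul] at hLi
    rw [hJ i, hLi, Pi.smul_apply, smul_eq_mul]
    field_simp
    ring
end
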